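/- For every positive integer d, the continued fraction expansion of √(2d(8d−1)) is [4d−1; overline{1, 2, 1, 8d−2}]. -/

import Mathlib

set_option maxHeartbeats 1000000

open GenContFract

/-- For every positive integer `d`, the continued fraction expansion of `√(2d(8d−1))`
is `[4d−1; 1, 2, 1, 8d−2, 1, 2, 1, 8d−2, …]`, periodic with period `(1, 2, 1, 8d−2)`. -/
theorem stmt9 (d : ℕ) (hd : 0 < d) :
    (GenContFract.of (Real.sqrt (2 * d * (8 * d - 1)))).h = 4 * (d : ℝ) - 1 ∧
    ∀ n : ℕ,
      (GenContFract.of (Real.sqrt (2 * d * (8 * d - 1)))).partDens.get? (4 * n)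
        = some (1 : ℝ) ∧
      (GenContFract.of (Real.sqrt (2 * d * (8 * d - 1)))).partDens.get? (4 * n + 1)
        = some (2 : ℝ) ∧
      (GenContFract.of (Real.sqrt (2 * d * (8 * d - 1)))).partDens.get? (4 * n + 2)
        = some (1 : ℝ) ∧
      (GenContFract.of (Real.sqrt (2 * d * (8 * d - 1)))).partDens.get? (4 * n + 3)
        = some (8 * (d : ℝ) - 2) := by
  set D : ℝ := (d : ℝ) with hDdef
  have hD : 1 ≤ D := by rw [hDdef]; exact_mod_cast hd
  set s : ℝ := Real.sqrt (2 * D * (8 * D - 1)) with hsdef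
  have hNnn : (0 : ℝ) ≤ 2 * D * (8 * D - 1) := by nlinarith
  have hs2 : s ^ 2 = 2 * D * (8 * D - 1) := Real.sq_sqrt hNnn
  have hslb : 4 * D - 1 < s := by
    rw [hsdef, show (4:ℝ) * D - 1 = Real.sqrt ((4*D-1)^2) from
      (Real.sqrt_sq (by nlinarith)).symm]
    apply Real.sqrt_lt_sqrt (by positivity)
    nlinarith
  have hsub : s < 4 * D := by
    rw [hsdef, show (4:ℝ) * D = Real.sqrt ((4*D)^2) from (Real.sqrt_sq (by nlinarith)).symm]
    apply Real.sqrt_lt_sqrt (by positivity)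
    nlinarith
  have h6 : (0:ℝ) < 6 * D - 1 := by nlinarith
  have h2 : (0:ℝ) < 2 * D := by nlinarith
  set v1 : ℝ := (s + (4 * D - 1)) / (6 * D - 1) with hv1def
  set v2 : ℝ := (s + 2 * D) / (2 * D) with hv2def
  set v3 : ℝ := (s + 2 * D) / (6 * D - 1) with hv3def
  set v4 : ℝ := s + 4 * D - 1 with hv4def
  -- floors
  have hfloor_s : ⌊s⌋ = 4 * (d : ℤ) - 1 := by
    rw [Int.floor_eq_iff]
    constructor
    · push_cast; linarith
    · push_cast; linarith
  have hfr_s : Int.fract s = s - (4 * D - 1) := by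
    rw [Int.fract, hfloor_s]; push_cast; ring
  have hfr_s_ne : Int.fract s ≠ 0 := by
    rw [hfr_s]
    exact (by linarith : (0:ℝ) < s - (4 * D - 1)).ne'
  have hinv_s : (Int.fract s)⁻¹ = v1 := by
    rw [hfr_s, hv1def]
    rw [inv_eq_iff_eq_inv, inv_div, eq_div_iff (by nlinarith)]
    nlinarith
  have hfloor_v1 : ⌊v1⌋ = 1 := by
    rw [Int.floor_eq_iff]
    constructor
    · push_cast
      rw [le_div_iff₀ h6]; linarith
    · push_cast
      rw [div_lt_iff₀ h6]; linarith
  have hfr_v1 : Int.fract v1 = (s - 2 * D) / (6 * D - 1) := by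
    rw [Int.fract, hfloor_v1, hv1def]
    push_cast
    rw [div_sub_one h6.ne']
    ring
  have hfr_v1_ne : Int.fract v1 ≠ 0 := by
    rw [hfr_v1]
    have : 0 < s - 2 * D := by linarith
    positivity
  have hinv_v1 : (Int.fract v1)⁻¹ = v2 := by
    rw [hfr_v1, hv2def, inv_div, div_eq_div_iff (by nlinarith) h2.ne']
    nlinarith
  have hfloor_v2 : ⌊v2⌋ = 2 := by
    rw [Int.floor_eq_iff]
    constructor
    · push_cast
      rw [le_div_iff₀ h2]; linarith
    · push_cast
      rw [div_lt_iff₀ h2]; linarith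
  have hfr_v2 : Int.fract v2 = (s - 2 * D) / (2 * D) := by
    rw [Int.fract, hfloor_v2, hv2def]
    push_cast
    field_simp
    ring
  have hfr_v2_ne : Int.fract v2 ≠ 0 := by
    rw [hfr_v2]
    have : 0 < s - 2 * D := by linarith
    positivity
  have hinv_v2 : (Int.fract v2)⁻¹ = v3 := by
    rw [hfr_v2, hv3def, inv_div, div_eq_div_iff (by nlinarith) h6.ne']
    nlinarith
  have hfloor_v3 : ⌊v3⌋ = 1 := by
    rw [Int.floor_eq_iff]
    constructor
    · push_cast
      rw [le_div_iff₀ h6]; linarith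
    · push_cast
      rw [div_lt_iff₀ h6]; linarith
  have hfr_v3 : Int.fract v3 = (s - (4 * D - 1)) / (6 * D - 1) := by
    rw [Int.fract, hfloor_v3, hv3def]
    push_cast
    rw [div_sub_one h6.ne']
    ring
  have hfr_v3_ne : Int.fract v3 ≠ 0 := by
    rw [hfr_v3]
    have : 0 < s - (4 * D - 1) := by linarith
    positivity
  have hinv_v3 : (Int.fract v3)⁻¹ = v4 := by
    rw [hfr_v3, hv4def, inv_div, div_eq_iff (by nlinarith)]
    nlinarith
  have hfloor_v4 : ⌊v4⌋ = 8 * (d : ℤ) - 2 := by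
    rw [Int.floor_eq_iff]
    constructor
    · push_cast; rw [hv4def]; linarith
    · push_cast; rw [hv4def]; linarith
  have hfr_v4 : Int.fract v4 = s - (4 * D - 1) := by
    rw [Int.fract, hfloor_v4, hv4def]
    push_cast
    ring
  have hfr_v4_ne : Int.fract v4 ≠ 0 := by
    rw [hfr_v4]
    exact (by linarith : (0:ℝ) < s - (4 * D - 1)).ne'
  have hinv_v4 : (Int.fract v4)⁻¹ = v1 := by
    rw [hfr_v4, ← hfr_s, hinv_s]
  -- heads
  have head_s : (GenContFract.of s).s.get? 0 = some ⟨1, (1:ℝ)⟩ := by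
    have := of_s_head hfr_s_ne
    rw [hinv_s, hfloor_v1, Stream'.Seq.head] at this
    simpa using this
  have head_v1 : (GenContFract.of v1).s.get? 0 = some ⟨1, (2:ℝ)⟩ := by
    have := of_s_head hfr_v1_ne
    rw [hinv_v1, hfloor_v2, Stream'.Seq.head] at this
    simpa using this
  have head_v2 : (GenContFract.of v2).s.get? 0 = some ⟨1, (1:ℝ)⟩ := by
    have := of_s_head hfr_v2_ne
    rw [hinv_v2, hfloor_v3, Stream'.Seq.head] at this
    simpa using this
  have head_v3 : (GenContFract.of v3).s.get? 0 = some ⟨1, 8 * D - 2⟩ := by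
    have := of_s_head hfr_v3_ne
    rw [hinv_v3, hfloor_v4, Stream'.Seq.head] at this
    convert this using 3
    simp [hDdef]
  have head_v4 : (GenContFract.of v4).s.get? 0 = some ⟨1, (1:ℝ)⟩ := by
    have := of_s_head hfr_v4_ne
    rw [hinv_v4, hfloor_v1, Stream'.Seq.head] at this
    simpa using this
  -- steps
  have step_s : ∀ n, (GenContFract.of s).s.get? (n + 1) = (GenContFract.of v1).s.get? n := by
    intro n; rw [of_s_succ, hinv_s]
  have step1 : ∀ n, (GenContFract.of v1).s.get? (n + 1) = (GenContFract.of v2).s.get? n := by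
    intro n; rw [of_s_succ, hinv_v1]
  have step2 : ∀ n, (GenContFract.of v2).s.get? (n + 1) = (GenContFract.of v3).s.get? n := by
    intro n; rw [of_s_succ, hinv_v2]
  have step3 : ∀ n, (GenContFract.of v3).s.get? (n + 1) = (GenContFract.of v4).s.get? n := by
    intro n; rw [of_s_succ, hinv_v3]
  have step4 : ∀ n, (GenContFract.of v4).s.get? (n + 1) = (GenContFract.of v1).s.get? n := by
    intro n; rw [of_s_succ, hinv_v4]
  have per : ∀ n, (GenContFract.of v1).s.get? (n + 4) = (GenContFract.of v1).s.get? n := by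
    intro n
    rw [show n + 4 = (n + 3) + 1 from rfl, step1, show n + 3 = (n + 2) + 1 from rfl,
      step2, show n + 2 = (n + 1) + 1 from rfl, step3, step4]
  have A : ∀ n, (GenContFract.of v1).s.get? (4 * n) = some ⟨1, (2:ℝ)⟩ := by
    intro n
    induction n with
    | zero => simpa using head_v1
    | succ m ih => rw [show 4 * (m + 1) = 4 * m + 4 by ring, per]; exact ih
  have B : ∀ n, (GenContFract.of v1).s.get? (4 * n + 1) = some ⟨1, (1:ℝ)⟩ := by
    intro n
    induction n with
    | zero => simpa [step1 0] using head_v2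
    | succ m ih => rw [show 4 * (m + 1) + 1 = (4 * m + 1) + 4 by ring, per]; exact ih
  have C : ∀ n, (GenContFract.of v1).s.get? (4 * n + 2) = some ⟨1, 8 * D - 2⟩ := by
    intro n
    induction n with
    | zero =>
      rw [show 4 * 0 + 2 = 1 + 1 from rfl, step1]
      exact (step2 0).trans head_v3
    | succ m ih => rw [show 4 * (m + 1) + 2 = (4 * m + 2) + 4 by ring, per]; exact ih
  have E : ∀ n, (GenContFract.of v1).s.get? (4 * n + 3) = some ⟨1, (1:ℝ)⟩ := by
    intro n
    induction n with
    | zero =>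
      rw [show 4 * 0 + 3 = 2 + 1 from rfl, step1]
      exact (step2 1).trans ((step3 0).trans head_v4)
    | succ m ih => rw [show 4 * (m + 1) + 3 = (4 * m + 3) + 4 by ring, per]; exact ih
  constructor
  · rw [of_h_eq_floor, hfloor_s]
    push_cast
    ring
  · intro n
    simp only [partDens, Stream'.Seq.map_get?]
    refine ⟨?_, ?_, ?_, ?_⟩
    · cases n with
      | zero => simp [head_s]
      | succ m =>
        rw [show 4 * (m + 1) = (4 * m + 3) + 1 by ring, step_s, E]
        rfl
    · rw [show 4 * n + 1 = (4 * n) + 1 from rfl, step_s, A]; rfl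
    · rw [show 4 * n + 2 = (4 * n + 1) + 1 from rfl, step_s, B]; rfl
    · rw [show 4 * n + 3 = (4 * n + 2) + 1 from rfl, step_s, C]; rfl
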